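/- Let A ⊆ H be an affine commutative-by-finite Hopf algebra with A semiprime or central in H, or H pointed. Then the restriction map ι° : H° → A° maps the tangential component W(H°) onto A', the irreducible (connected) component of A° containing the counit; that is, ι°(W(H°)) = A' = {f ∈ A° : f((A⁺)ⁿ) = 0 for some n > 0}. -/

import Mathlib

open TensorProduct LinearMap Coalgebra

namespace Paper

noncomputable section

variable (k : Type) [Field k]

section Coalg

variable {C : Type} [AddCommMonoid C] [Module k C] [Coalgebra k C]

/-- Convolution product on the linear dual of a coalgebra. -/
noncomputable def conv (f g : Module.Dual k C) : Module.Dual k C :=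
  (TensorProduct.lid k k).toLinearMap ∘ₗ TensorProduct.map f g ∘ₗ Coalgebra.comul

/-- The unit of the convolution algebra on the dual: the counit. -/
noncomputable def convOne : Module.Dual k C := Coalgebra.counit

/-- Iterated convolution power. -/
noncomputable def convPow (f : Module.Dual k C) : ℕ → Module.Dual k C
  | 0 => convOne k
  | n + 1 => conv k f (convPow f n)

end Coalg

/-- The finite dual of an algebra: functionals vanishing on a two-sided ideal
of finite codimension. -/
def finDual (H : Type) [Ring H] [Algebra k H] : Set (Module.Dual k H) :=
  {f | ∃ I : Submodule k H, (∀ (h : H), ∀ x ∈ I, h * x ∈ I ∧ x * h ∈ I) ∧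
    I ≤ LinearMap.ker f ∧ FiniteDimensional k (H ⧸ I)}

section Hopf

variable (H : Type) [Ring H] [HopfAlgebra k H]

/-- Left adjoint action `(ad_ℓ h)(a) = Σ h₁ a S(h₂)`. -/
noncomputable def adl (h a : H) : H :=
  TensorProduct.lift (((LinearMap.mul k H).comp (LinearMap.mulRight k a)).compl₂
    (HopfAlgebra.antipode (R := k))) (Coalgebra.comul h)

/-- Right adjoint action `(ad_r h)(a) = Σ S(h₁) a h₂`. -/
noncomputable def adr (h a : H) : H :=
  TensorProduct.lift ((LinearMap.mul k H).comp ((LinearMap.mulRight k a) ∘ₗ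
    (HopfAlgebra.antipode (R := k)))) (Coalgebra.comul h)

/-- Left adjoint action on the dual: `(ad_ℓ φ)(f) = Σ φ₁ f S°(φ₂)`, i.e.
`h ↦ Σ φ(h₁ S(h₃)) f(h₂)`. -/
noncomputable def adld (φ f : Module.Dual k H) : Module.Dual k H :=
  (TensorProduct.lid k k).toLinearMap ∘ₗ
    TensorProduct.map (φ ∘ₗ LinearMap.mul' k H ∘ₗ
      (HopfAlgebra.antipode (R := k)).lTensor H) f ∘ₗ
    (TensorProduct.assoc k H H H).symm.toLinearMap ∘ₗ
    ((TensorProduct.comm k H H).toLinearMap.lTensor H) ∘ₗ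
    ((Coalgebra.comul (R := k) (A := H)).lTensor H) ∘ₗ
    Coalgebra.comul

/-- Right adjoint action on the dual: `(ad_r φ)(f) = Σ S°(φ₁) f φ₂`, i.e.
`h ↦ Σ φ(S(h₁) h₃) f(h₂)`. -/
noncomputable def adrd (φ f : Module.Dual k H) : Module.Dual k H :=
  (TensorProduct.lid k k).toLinearMap ∘ₗ
    TensorProduct.map (φ ∘ₗ LinearMap.mul' k H ∘ₗ
      (HopfAlgebra.antipode (R := k)).rTensor H) f ∘ₗ
    (TensorProduct.assoc k H H H).symm.toLinearMap ∘ₗ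
    ((TensorProduct.comm k H H).toLinearMap.lTensor H) ∘ₗ
    ((Coalgebra.comul (R := k) (A := H)).lTensor H) ∘ₗ
    Coalgebra.comul

/-- A submodule is a subcoalgebra if its image under `comul` lies in `V ⊗ V`. -/
def IsSubcoalgebra (V : Submodule k H) : Prop :=
  ∀ x ∈ V, Coalgebra.comul (R := k) x ∈
    LinearMap.range (TensorProduct.map V.subtype V.subtype)

/-- A Hopf algebra is pointed if every simple subcoalgebra is one-dimensional. -/
def IsPointedHopf : Prop :=
  ∀ V : Submodule k H, IsSubcoalgebra k H V → V ≠ ⊥ →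
    (∀ W : Submodule k H, W ≤ V → IsSubcoalgebra k H W → W = ⊥ ∨ W = V) →
    Module.finrank k ↥V = 1

/-- A coideal: `ε(X) = 0` and `Δ(X) ⊆ X ⊗ H + H ⊗ X`. -/
def IsCoideal (X : Submodule k H) : Prop :=
  (∀ x ∈ X, Coalgebra.counit (R := k) x = 0) ∧
  (∀ x ∈ X, Coalgebra.comul (R := k) x ∈
    LinearMap.range (TensorProduct.map X.subtype (LinearMap.id (M := H))) ⊔
    LinearMap.range (TensorProduct.map (LinearMap.id (M := H)) X.subtype))

/-- `S` is a Hopf subalgebra of the finite dual `H°` (with its convolution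
product; closure under the coproduct is expressed in pairing form). -/
def IsHopfSubalgSet (S : Set (Module.Dual k H)) : Prop :=
  S ⊆ finDual k H ∧ convOne k ∈ S ∧
  (∀ f g, f ∈ S → g ∈ S → f + g ∈ S ∧ conv k f g ∈ S) ∧
  (∀ (c : k), ∀ f ∈ S, c • f ∈ S) ∧
  (∀ f ∈ S, f ∘ₗ HopfAlgebra.antipode (R := k) ∈ S) ∧
  (∀ f ∈ S, ∃ (n : ℕ) (s t : Fin n → Module.Dual k H),
    (∀ i, s i ∈ S ∧ t i ∈ S) ∧ ∀ x y : H, f (x * y) = ∑ i, s i x * t i y)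

end Hopf

section Ext

variable (A : Type) [CommRing A] [HopfAlgebra k A]
variable (H : Type) [Ring H] [HopfAlgebra k H]

/-- The submodule `A⁺H` of `H` (image of the augmentation ideal times `H`). -/
def augHIdeal (ι : A →ₗ[k] H) : Submodule k H :=
  Submodule.span k
    {x : H | ∃ (a : A) (h : H), Coalgebra.counit (R := k) a = 0 ∧ x = ι a * h}

/-- The subset of the dual of `H` corresponding to `H̄* = (H/A⁺H)*`:
functionals vanishing on `A⁺H`. -/
def hbarStar (ι : A →ₗ[k] H) : Set (Module.Dual k H) :=
  {f | ∀ x ∈ augHIdeal k A H ι, f x = 0}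

/-- The tangential component `W(H°)`. -/
def tangential (ι : A →ₗ[k] H) : Set (Module.Dual k H) :=
  {f | f ∈ finDual k H ∧ ∃ n : ℕ, 0 < n ∧ ∀ x ∈ (augHIdeal k A H ι) ^ n, f x = 0}

/-- The augmentation ideal of the commutative Hopf algebra `A`. -/
def augIdeal : Ideal A := RingHom.ker (Bialgebra.counitAlgHom k A)

/-- The irreducible component `A'` of `A°` containing the counit:
functionals vanishing on a power of the augmentation ideal. -/
def Aprime : Set (Module.Dual k A) :=
  {f | ∃ n : ℕ, 0 < n ∧ ∀ x ∈ (augIdeal k A) ^ n, f x = 0}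

/-- The Lie algebra `𝔤` of `G_H`: primitive functionals on `A`. -/
def gLie : Set (Module.Dual k A) :=
  {f | f 1 = 0 ∧ ∀ x y : A, f (x * y) =
    f x * Coalgebra.counit (R := k) y + Coalgebra.counit (R := k) x * f y}

/-- An ideal of `A` is `H̄`-stable if it is stable under the (left) adjoint
action of `H` on `A` (which factors through `H̄`). -/
def IsHStable (ι : A →ₗ[k] H) (I : Ideal A) : Prop :=
  ∀ (h : H), ∀ a ∈ I, ∃ b ∈ I, ι b = adl k H h (ι a)

/-- `mc` is the `H̄`-core of `m`: the largest `H̄`-stable ideal of `A`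
contained in `m`. -/
def IsCore (ι : A →ₗ[k] H) (m mc : Ideal A) : Prop :=
  IsHStable k A H ι mc ∧ mc ≤ m ∧
    ∀ I : Ideal A, IsHStable k A H ι I → I ≤ m → I ≤ mc

/-- The submodule `H·J` of `H`, for an ideal `J` of `A`. -/
def leftMul (ι : A →ₗ[k] H) (J : Ideal A) : Submodule k H :=
  Submodule.span k {x : H | ∃ (h : H), ∃ a ∈ J, x = h * ι a}

/-- The submodule `J·H` of `H`, for an ideal `J` of `A`. -/
def rightMul (ι : A →ₗ[k] H) (J : Ideal A) : Submodule k H :=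
  Submodule.span k {x : H | ∃ (h : H), ∃ a ∈ J, x = ι a * h}

/-- The subcoalgebra `ĝ := (H/H m_g^{(H̄)})*` of `H°`, as a submodule of the dual. -/
def ghat (ι : A →ₗ[k] H) (core : Ideal A → Ideal A) (g : A →ₐ[k] k) :
    Submodule k (Module.Dual k H) :=
  (leftMul k A H ι (core (RingHom.ker g))).dualAnnihilator

/-- The character component `k̂G_H` of `H°`. -/
def charComp (ι : A →ₗ[k] H) (core : Ideal A → Ideal A) :
    Set (Module.Dual k H) :=
  {f | ∃ s : Finset (A →ₐ[k] k), s.Nonempty ∧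
    ∀ x ∈ ⨅ g ∈ s, leftMul k A H ι (core (RingHom.ker g)), f x = 0}

/-- Hypothesis (OrbSemi): all orbit algebras `A/m^{(H̄)}` are semisimple. -/
def OrbSemi (core : Ideal A → Ideal A) : Prop :=
  ∀ m : Ideal A, m.IsMaximal → IsSemisimpleRing (A ⧸ core m)

/-- Restriction of functionals along `ι` : the map `ι° : H° → A°`. -/
def iotaDual (ι : A →ₗ[k] H) (f : Module.Dual k H) : Module.Dual k A := f ∘ₗ ι

/-- Coextension of functionals along the projection `Π : H → A`:
the map `Π° : A° → H°`. -/
def PiDual (p : H →ₗ[k] A) (α : Module.Dual k A) : Module.Dual k H := α ∘ₗ p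

/-- `A ⊆ H` is an affine commutative-by-finite Hopf algebra, where the
inclusion of the commutative normal Hopf subalgebra `A` is recorded by the
injective Hopf algebra map `ι`. -/
structure CommByFinite (ι : A →ₗ[k] H) : Prop where
  ι_inj : Function.Injective ι
  ι_one : ι 1 = 1
  ι_mul : ∀ a b : A, ι (a * b) = ι a * ι b
  ι_comul : ∀ a : A,
    Coalgebra.comul (R := k) (ι a) = TensorProduct.map ι ι (Coalgebra.comul a)
  ι_counit : ∀ a : A,
    Coalgebra.counit (R := k) (ι a) = Coalgebra.counit (R := k) a
  ι_antipode : ∀ a : A,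
    ι (HopfAlgebra.antipode (R := k) a) = HopfAlgebra.antipode (R := k) (ι a)
  affine : ∃ s : Finset A, Algebra.adjoin k (s : Set A) = ⊤
  normal_left : ∀ (h : H) (a : A), adl k H h (ι a) ∈ Set.range ι
  normal_right : ∀ (h : H) (a : A), adr k H h (ι a) ∈ Set.range ι
  finiteOver : ∃ s : Finset H,
    Submodule.span k {x : H | ∃ (a : A), ∃ y ∈ s, x = ι a * y} = ⊤

/-- The standing hypothesis: `A` is semiprime (reduced) or central in `H`,
or `H` is pointed. -/
def StandingHyp (ι : A →ₗ[k] H) : Prop :=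
  IsReduced A ∨ (∀ (a : A) (h : H), ι a * h = h * ι a) ∨ IsPointedHopf k H

/-- `Π : H → A` is the projection of a direct sum decomposition
`H = A ⊕ X` of right `A`-modules. -/
structure IsSplitting (ι : A →ₗ[k] H) (p : H →ₗ[k] A) : Prop where
  left_inv : ∀ a : A, p (ι a) = a
  right_linear : ∀ (h : H) (a : A), p (h * ι a) = p h * a

/-- Hypothesis (CoSplit) for a given splitting `Π`: the complement
`X = ker Π` is a coideal of `H`. -/
def CoSplit (p : H →ₗ[k] A) : Prop := IsCoideal k H (LinearMap.ker p)

end Ext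

section Quot

variable (A : Type) [CommRing A] [HopfAlgebra k A]
variable (H : Type) [Ring H] [HopfAlgebra k H]
variable (Hb : Type) [Ring Hb] [HopfAlgebra k Hb]

/-- `π : H → H̄` realises `H̄` as the quotient Hopf algebra `H/A⁺H`. -/
structure IsHbarQuotient (ι : A →ₗ[k] H) (π : H →ₗ[k] Hb) : Prop where
  π_surj : Function.Surjective π
  π_one : π 1 = 1
  π_mul : ∀ x y : H, π (x * y) = π x * π y
  π_comul : ∀ x : H,
    Coalgebra.comul (R := k) (π x) = TensorProduct.map π π (Coalgebra.comul x)
  π_counit : ∀ x : H,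
    Coalgebra.counit (R := k) (π x) = Coalgebra.counit (R := k) x
  π_antipode : ∀ x : H,
    π (HopfAlgebra.antipode (R := k) x) = HopfAlgebra.antipode (R := k) (π x)
  π_ker : LinearMap.ker π = augHIdeal k A H ι
  findim : FiniteDimensional k Hb

/-- Composition with `π` : the map `π° : H̄* → H°`. -/
def piDual (π : H →ₗ[k] Hb) (β : Module.Dual k Hb) : Module.Dual k H := β ∘ₗ π

end Quot

end

end Paper


section Statement7Aux

open Paper TensorProduct LinearMap Coalgebra HopfAlgebra

variable {k : Type} [Field k]
variable {A : Type} [CommRing A] [HopfAlgebra k A]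
variable {H : Type} [Ring H] [HopfAlgebra k H]
variable {ι : A →ₗ[k] H}

lemma S7.mem_augIdeal_iff (a : A) :
    a ∈ augIdeal k A ↔ Coalgebra.counit (R := k) a = 0 := by
  simp [Paper.augIdeal, RingHom.mem_ker]

lemma S7.counit_mul (x y : H) :
    Coalgebra.counit (R := k) (x * y) =
      Coalgebra.counit (R := k) x * Coalgebra.counit (R := k) y := by
  simpa using map_mul (Bialgebra.counitAlgHom k H) x y

/-- Key normality lemma: `H · ι(A⁺) ⊆ A⁺H`. -/
lemma S7.mul_iota_mem (hC : CommByFinite k A H ι) (b : A)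
    (hb : Coalgebra.counit (R := k) b = 0) (h : H) :
    h * ι b ∈ augHIdeal k A H ι := by
  classical
  set S : H →ₗ[k] H := HopfAlgebra.antipode (R := k) with hS
  let r := ℛ k h
  let r1 : ∀ i : r.ι, Coalgebra.Repr k (r.left i) (H × H) := fun i => ℛ k (r.left i)
  let r2 : ∀ i : r.ι, Coalgebra.Repr k (r.right i) (H × H) := fun i => ℛ k (r.right i)
  have hco := Coalgebra.sum_tmul_tmul_eq r r1 r2
  -- apply the linear map x ⊗ (y ⊗ z) ↦ x * ((ι b * S y) * z)
  let inner : H →ₗ[k] H →ₗ[k] H :=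
    (LinearMap.mul k H) ∘ₗ (LinearMap.mulLeft k (ι b)) ∘ₗ S
  let T : H ⊗[k] (H ⊗[k] H) →ₗ[k] H :=
    (LinearMap.mul' k H) ∘ₗ (TensorProduct.lift inner).lTensor H
  have hT : ∀ x y z : H, T (x ⊗ₜ[k] (y ⊗ₜ[k] z)) = x * ((ι b * S y) * z) := by
    intro x y z
    simp [T, inner]
  have happ := congrArg T hco
  simp only [map_sum, hT] at happ
  -- RHS equals `h * ι b`
  have hrhs : ∑ i ∈ r.index, ∑ j ∈ (r2 i).index,
      r.left i * ((ι b * S ((r2 i).left j)) * (r2 i).right j) = h * ι b := by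
    have hstep : ∀ i : r.ι, ∑ j ∈ (r2 i).index,
        r.left i * ((ι b * S ((r2 i).left j)) * (r2 i).right j)
        = Coalgebra.counit (R := k) (r.right i) • (r.left i * ι b) := by
      intro i
      have hsum : ∑ j ∈ (r2 i).index, S ((r2 i).left j) * (r2 i).right j
          = algebraMap k H (Coalgebra.counit (R := k) (r.right i)) :=
        HopfAlgebra.sum_antipode_mul_eq_algebraMap_counit (r2 i)
      calc ∑ j ∈ (r2 i).index, r.left i * ((ι b * S ((r2 i).left j)) * (r2 i).right j)
          = r.left i * (ι b * (∑ j ∈ (r2 i).index, S ((r2 i).left j) * (r2 i).right j)) := by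
            rw [Finset.mul_sum, Finset.mul_sum]
            congr 1; ext j; rw [mul_assoc]
        _ = Coalgebra.counit (R := k) (r.right i) • (r.left i * ι b) := by
            rw [hsum,
              show ι b * algebraMap k H (Coalgebra.counit (R := k) (r.right i))
                = algebraMap k H (Coalgebra.counit (R := k) (r.right i)) * ι b from
                (Algebra.commutes _ _).symm,
              ← Algebra.smul_def, mul_smul_comm]
    rw [Finset.sum_congr rfl (fun i _ => hstep i)]
    have h2 : (∑ i ∈ r.index, Coalgebra.counit (R := k) (r.right i) • r.left i) = h := by
      have h3 := congrArg (TensorProduct.rid k H) (Coalgebra.sum_tmul_counit_eq r)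
      rw [map_sum] at h3
      simp only [TensorProduct.rid_tmul, one_smul] at h3
      exact h3
    calc ∑ i ∈ r.index, Coalgebra.counit (R := k) (r.right i) • (r.left i * ι b)
        = (∑ i ∈ r.index, Coalgebra.counit (R := k) (r.right i) • r.left i) * ι b := by
          rw [Finset.sum_mul]
          exact Finset.sum_congr rfl (fun i _ => (smul_mul_assoc _ _ _).symm)
      _ = h * ι b := by rw [h2]
  rw [hrhs] at happ
  -- each inner sum on the LHS is `adl k H (r.left i) (ι b)`
  have hadl : ∀ i : r.ι, ∑ j ∈ (r1 i).index,
      (r1 i).left j * (ι b * S ((r1 i).right j) * r.right i)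
      = adl k H (r.left i) (ι b) * r.right i := by
    intro i
    rw [Paper.adl, ← (r1 i).eq, map_sum, Finset.sum_mul]
    refine Finset.sum_congr rfl (fun j _ => ?_)
    simp [mul_assoc, hS]
  rw [Finset.sum_congr rfl (fun i _ => hadl i)] at happ
  -- each `adl k H (r.left i) (ι b)` is `ι a` for some `a ∈ A⁺`
  rw [← happ]
  refine Submodule.sum_mem _ (fun i _ => ?_)
  obtain ⟨a, ha⟩ := hC.normal_left (r.left i) b
  have hea : Coalgebra.counit (R := k) a = 0 := by
    have h1 : Coalgebra.counit (R := k) (ι a) = Coalgebra.counit (R := k) a := hC.ι_counit a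
    rw [← h1, ha]
    -- counit of adl
    rw [Paper.adl, ← (r1 i).eq, map_sum, map_sum]
    refine Finset.sum_eq_zero (fun j _ => ?_)
    simp only [TensorProduct.lift.tmul]
    simp only [LinearMap.compl₂_apply, LinearMap.comp_apply, LinearMap.mul_apply',
      LinearMap.mulRight_apply]
    rw [S7.counit_mul, S7.counit_mul, hC.ι_counit b, hb]
    ring
  exact Submodule.subset_span ⟨a, r.right i, hea, by rw [ha]⟩

/-- The span `ι((A⁺)^m)·H`. -/
def S7.Jm (k : Type) [Field k] (A : Type) [CommRing A] [HopfAlgebra k A]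
    (H : Type) [Ring H] [HopfAlgebra k H] (ι : A →ₗ[k] H) (m : ℕ) : Submodule k H :=
  Submodule.span k {x : H | ∃ c ∈ (augIdeal k A) ^ m, ∃ h : H, x = ι c * h}

lemma S7.iota_mul_mem (a : A) (ha : Coalgebra.counit (R := k) a = 0) (h : H) :
    ι a * h ∈ augHIdeal k A H ι :=
  Submodule.subset_span ⟨a, h, ha, rfl⟩

lemma S7.augH_le_J1 : augHIdeal k A H ι ≤ S7.Jm k A H ι 1 := by
  refine Submodule.span_le.mpr ?_
  rintro x ⟨a, h, ha, rfl⟩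
  exact Submodule.subset_span ⟨a, by rwa [pow_one, S7.mem_augIdeal_iff], h, rfl⟩

/-- `H · ι((A⁺)^m) ⊆ ι((A⁺)^m)·H`. -/
lemma S7.mul_iota_pow_mem (hC : CommByFinite k A H ι) :
    ∀ m : ℕ, 0 < m → ∀ c ∈ (augIdeal k A) ^ m, ∀ h : H,
      h * ι c ∈ S7.Jm k A H ι m := by
  intro m
  induction m with
  | zero => omega
  | succ n IH =>
    intro _ c hc
    rcases Nat.eq_zero_or_pos n with hn | hn
    · subst hn
      rw [pow_one] at hc
      intro h
      exact S7.augH_le_J1 (S7.mul_iota_mem hC c ((S7.mem_augIdeal_iff c).mp hc) h)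
    · rw [pow_succ'] at hc
      refine Submodule.mul_induction_on hc ?_ ?_
      · intro e he d hd h
        have hinner : ∀ a : A, Coalgebra.counit (R := k) a = 0 →
            ∀ Y ∈ S7.Jm k A H ι n, ι a * Y ∈ S7.Jm k A H ι (n + 1) := by
          intro a ha Y hY
          induction hY using Submodule.span_induction with
          | mem y hy =>
            obtain ⟨c', hc', h'', rfl⟩ := hy
            rw [← mul_assoc, ← hC.ι_mul]
            refine Submodule.subset_span ⟨a * c', ?_, h'', rfl⟩
            rw [pow_succ']
            exact Submodule.mul_mem_mul ((S7.mem_augIdeal_iff a).mpr ha) hc'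
          | zero => simp
          | add y1 hy1 y2 hy2 ih1 ih2 => rw [mul_add]; exact add_mem ih1 ih2
          | smul c' y hy ih => rw [mul_smul_comm]; exact Submodule.smul_mem _ _ ih
        have hXd : ∀ X ∈ augHIdeal k A H ι, X * ι d ∈ S7.Jm k A H ι (n + 1) := by
          intro X hX
          induction hX using Submodule.span_induction with
          | mem x hx =>
            obtain ⟨a, h', ha, rfl⟩ := hx
            rw [mul_assoc]
            exact hinner a ha _ (IH hn d hd h')
          | zero => simp
          | add x1 hx1 x2 hx2 ih1 ih2 => rw [add_mul]; exact add_mem ih1 ih2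
          | smul c' x hx ih => rw [smul_mul_assoc]; exact Submodule.smul_mem _ _ ih
        rw [hC.ι_mul, ← mul_assoc]
        exact hXd _ (S7.mul_iota_mem hC e ((S7.mem_augIdeal_iff e).mp he) h)
      · intro x y hx hy h
        rw [map_add, mul_add]
        exact add_mem (hx h) (hy h)

/-- `ι((A⁺)^m) · H ⊆ (A⁺H)^m`. -/
lemma S7.iota_pow_mul_mem (hC : CommByFinite k A H ι) :
    ∀ m : ℕ, 0 < m → ∀ c ∈ (augIdeal k A) ^ m, ∀ h : H,
      ι c * h ∈ (augHIdeal k A H ι) ^ m := by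
  intro m
  induction m with
  | zero => omega
  | succ n IH =>
    intro _ c hc
    rcases Nat.eq_zero_or_pos n with hn | hn
    · subst hn
      rw [pow_one] at hc ⊢
      intro h
      exact S7.iota_mul_mem c ((S7.mem_augIdeal_iff c).mp hc) h
    · rw [pow_succ'] at hc
      refine Submodule.mul_induction_on hc ?_ ?_
      · intro e he d hd h
        rw [hC.ι_mul, mul_assoc, pow_succ']
        have h1 : ι e = ι e * 1 := by rw [mul_one]
        have h2 : ι e ∈ augHIdeal k A H ι := by
          rw [h1]; exact S7.iota_mul_mem e ((S7.mem_augIdeal_iff e).mp he) 1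
        exact Submodule.mul_mem_mul h2 (IH hn d hd h)
      · intro x y hx hy h
        rw [map_add, add_mul]
        exact add_mem (hx h) (hy h)

/-- `A⁺H` is stable under right multiplication. -/
lemma S7.augH_mul_right {x : H} (hx : x ∈ augHIdeal k A H ι) (h : H) :
    x * h ∈ augHIdeal k A H ι := by
  induction hx using Submodule.span_induction with
  | mem y hy =>
    obtain ⟨a, h', ha, rfl⟩ := hy
    rw [mul_assoc]
    exact S7.iota_mul_mem a ha (h' * h)
  | zero => simp
  | add y1 hy1 y2 hy2 ih1 ih2 => rw [add_mul]; exact add_mem ih1 ih2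
  | smul c y hy ih => rw [smul_mul_assoc]; exact Submodule.smul_mem _ _ ih

/-- `A⁺H` is stable under left multiplication. -/
lemma S7.augH_mul_left (hC : CommByFinite k A H ι) {x : H}
    (hx : x ∈ augHIdeal k A H ι) (h : H) :
    h * x ∈ augHIdeal k A H ι := by
  induction hx using Submodule.span_induction with
  | mem y hy =>
    obtain ⟨a, h', ha, rfl⟩ := hy
    rw [← mul_assoc]
    exact S7.augH_mul_right (S7.mul_iota_mem hC a ha h) h'
  | zero => simp
  | add y1 hy1 y2 hy2 ih1 ih2 => rw [mul_add]; exact add_mem ih1 ih2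
  | smul c y hy ih => rw [mul_smul_comm]; exact Submodule.smul_mem _ _ ih

/-- Powers of `A⁺H` are two-sided stable. -/
lemma S7.augH_pow_stable (hC : CommByFinite k A H ι) (m : ℕ) (hm : 0 < m) (h : H) :
    ∀ x ∈ (augHIdeal k A H ι) ^ m, h * x ∈ (augHIdeal k A H ι) ^ m ∧
      x * h ∈ (augHIdeal k A H ι) ^ m := by
  intro x hx
  constructor
  · obtain ⟨n, rfl⟩ := Nat.exists_eq_add_of_lt hm
    rw [zero_add, pow_succ'] at hx ⊢
    refine Submodule.mul_induction_on hx ?_ ?_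
    · intro u hu v hv
      rw [← mul_assoc]
      exact Submodule.mul_mem_mul (S7.augH_mul_left hC hu h) hv
    · intro a b ha hb
      rw [mul_add]; exact add_mem ha hb
  · obtain ⟨n, rfl⟩ := Nat.exists_eq_add_of_lt hm
    rw [zero_add, pow_succ] at hx ⊢
    refine Submodule.mul_induction_on hx ?_ ?_
    · intro u hu v hv
      rw [mul_assoc]
      exact Submodule.mul_mem_mul hu (S7.augH_mul_right hv h)
    · intro a b ha hb
      rw [add_mul]; exact add_mem ha hb

/-- `ι` as a ring homomorphism. -/
def S7.iotaRingHom (hC : CommByFinite k A H ι) : A →+* H where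
  toFun := ι
  map_one' := hC.ι_one
  map_mul' := hC.ι_mul
  map_zero' := map_zero ι
  map_add' := map_add ι

/-- The Artin–Rees argument: elements of `A` lying in a high power of `A⁺H`
lie in a given power of `A⁺`. -/
lemma S7.artinRees (hC : CommByFinite k A H ι) (n : ℕ) (hn : 0 < n) :
    ∃ m : ℕ, 0 < m ∧ n ≤ m ∧
      ∀ a : A, ι a ∈ (augHIdeal k A H ι) ^ m → a ∈ (augIdeal k A) ^ n := by
  classical
  letI : Module A H := Module.compHom H (S7.iotaRingHom hC)
  have hsmul : ∀ (a : A) (h : H), a • h = ι a * h := fun a h => rfl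
  letI : IsScalarTower k A H := ⟨fun c a h => by
    rw [hsmul, hsmul, map_smul, smul_mul_assoc]⟩
  obtain ⟨s, hs⟩ := hC.affine
  haveI : Algebra.FiniteType k A := ⟨⟨s, hs⟩⟩
  haveI : IsNoetherianRing A := Algebra.FiniteType.isNoetherianRing k A
  obtain ⟨t, ht⟩ := hC.finiteOver
  haveI : Module.Finite A H := by
    refine ⟨⟨t, ?_⟩⟩
    have hle : Submodule.span k {x : H | ∃ (a : A), ∃ y ∈ t, x = ι a * y} ≤
        (Submodule.span A ((↑t : Set H))).restrictScalars k := by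
      refine Submodule.span_le.mpr ?_
      rintro x ⟨a, y, hy, rfl⟩
      rw [← hsmul]
      exact Submodule.smul_mem _ a (Submodule.subset_span hy)
    rw [eq_top_iff]
    intro x _
    exact hle (ht.ge Submodule.mem_top)
  set I : Ideal A := augIdeal k A with hI
  let ιA : A →ₗ[A] H :=
    { toFun := ι, map_add' := map_add ι,
      map_smul' := fun a b => by simp [smul_eq_mul, hsmul, hC.ι_mul] }
  set N : Submodule A H := LinearMap.range ιA with hN
  obtain ⟨c, hc⟩ := Ideal.exists_pow_inf_eq_pow_smul I N
  -- stability of `I^m • ⊤` under left multiplication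
  have hstab : ∀ m : ℕ, 0 < m → ∀ v ∈ (I ^ m • ⊤ : Submodule A H), ∀ h : H,
      h * v ∈ (I ^ m • ⊤ : Submodule A H) := by
    intro m hm v hv h
    refine Submodule.smul_induction_on hv (fun r hr w _ => ?_) (fun v1 v2 ih1 ih2 => ?_)
    case _ =>
      rw [hsmul, ← mul_assoc]
      have h1 : h * ι r ∈ S7.Jm k A H ι m := S7.mul_iota_pow_mem hC m hm r hr h
      have h2 : ∀ X ∈ S7.Jm k A H ι m, X * w ∈ (I ^ m • ⊤ : Submodule A H) := by
        intro X hX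
        induction hX using Submodule.span_induction with
        | mem y hy =>
          obtain ⟨c', hc', h', rfl⟩ := hy
          rw [mul_assoc, ← hsmul]
          exact Submodule.smul_mem_smul hc' Submodule.mem_top
        | zero => simp
        | add y1 hy1 y2 hy2 ih1 ih2 => rw [add_mul]; exact add_mem ih1 ih2
        | smul c' y hy ih =>
          rw [smul_mul_assoc]
          exact Submodule.smul_mem ((I ^ m • ⊤ : Submodule A H).restrictScalars k) c' ih
      exact h2 _ h1
    case _ => rw [mul_add]; exact add_mem ih1 ih2
  -- `(A⁺H)^m ⊆ I^m • ⊤`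
  have hpow : ∀ m : ℕ, 0 < m →
      (augHIdeal k A H ι) ^ m ≤ ((I ^ m • ⊤ : Submodule A H).restrictScalars k) := by
    intro m
    induction m with
    | zero => omega
    | succ q IH =>
      intro _
      rcases Nat.eq_zero_or_pos q with hq | hq
      · subst hq
        rw [pow_one, pow_one]
        refine Submodule.span_le.mpr ?_
        rintro x ⟨a, h, ha, rfl⟩
        rw [← hsmul, SetLike.mem_coe, Submodule.restrictScalars_mem]
        exact Submodule.smul_mem_smul ((S7.mem_augIdeal_iff a).mpr ha) Submodule.mem_top
      · rw [pow_succ']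
        refine Submodule.mul_le.mpr ?_
        intro u hu v hv
        have hv' : v ∈ (I ^ q • ⊤ : Submodule A H) := IH hq hv
        induction hu using Submodule.span_induction with
        | mem y hy =>
          obtain ⟨a, h, ha, rfl⟩ := hy
          rw [mul_assoc, ← hsmul]
          have : h * v ∈ (I ^ q • ⊤ : Submodule A H) := hstab q hq v hv' h
          rw [Submodule.restrictScalars_mem, pow_succ', ← Ideal.smul_eq_mul, Submodule.smul_assoc]
          exact Submodule.smul_mem_smul ((S7.mem_augIdeal_iff a).mpr ha) this
        | zero => simp
        | add y1 hy1 y2 hy2 ih1 ih2 => rw [add_mul]; exact add_mem ih1 ih2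
        | smul c' y hy ih =>
          rw [smul_mul_assoc]
          exact Submodule.smul_mem (Submodule.restrictScalars k _) c' ih
  refine ⟨n + c, by omega, by omega, ?_⟩
  intro a ha
  have hmem : ι a ∈ ((I ^ (n + c) • ⊤ : Submodule A H) ⊓ N : Submodule A H) := by
    refine Submodule.mem_inf.mpr ⟨?_, ⟨a, rfl⟩⟩
    exact hpow (n + c) (by omega) ha
  rw [hc (n + c) (Nat.le_add_left c n), Nat.add_sub_cancel] at hmem
  have hmem2 : ι a ∈ (I ^ n • N : Submodule A H) := by
    have hle : (I ^ n • ((I ^ c • ⊤ : Submodule A H) ⊓ N) : Submodule A H) ≤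
        I ^ n • N := smul_mono_right _ inf_le_right
    exact hle hmem
  have hfin : ∀ x ∈ (I ^ n • N : Submodule A H), ∃ d ∈ I ^ n, ι d = x := by
    intro x hx
    refine Submodule.smul_induction_on hx (fun r hr w hw => ?_) (fun x1 x2 ih1 ih2 => ?_)
    · obtain ⟨b, rfl⟩ := hw
      exact ⟨r * b, Ideal.mul_mem_right b _ hr, by rw [hC.ι_mul, ← hsmul]; rfl⟩
    · obtain ⟨d1, hd1, he1⟩ := ih1
      obtain ⟨d2, hd2, he2⟩ := ih2
      exact ⟨d1 + d2, add_mem hd1 hd2, by rw [map_add, he1, he2]⟩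
  obtain ⟨d, hd, he⟩ := hfin _ hmem2
  rwa [← hC.ι_inj he]

lemma S7.fd_of_ker_range {M N : Type} [AddCommGroup M] [Module k M]
    [AddCommGroup N] [Module k N] (f : M →ₗ[k] N)
    (h1 : FiniteDimensional k (LinearMap.ker f))
    (h2 : FiniteDimensional k (LinearMap.range f)) :
    FiniteDimensional k M := by
  have hfg : (⊤ : Submodule k M).FG := by
    apply Submodule.fg_of_fg_map_of_fg_inf_ker f
    · rw [Submodule.map_top]
      exact (Submodule.fg_iff_finiteDimensional _).mpr h2
    · rw [top_inf_eq]
      exact (Submodule.fg_iff_finiteDimensional _).mpr h1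
  exact Module.finite_def.mpr hfg

lemma S7.findim_Aquot (hC : CommByFinite k A H ι) (m : ℕ) :
    FiniteDimensional k (A ⧸ (Submodule.restrictScalars k ((augIdeal k A) ^ m))) := by
  classical
  obtain ⟨s, hs⟩ := hC.affine
  haveI : Algebra.FiniteType k A := ⟨⟨s, hs⟩⟩
  haveI : IsNoetherianRing A := Algebra.FiniteType.isNoetherianRing k A
  induction m with
  | zero =>
    rw [pow_zero]
    refine Module.finite_def.mpr ⟨∅, ?_⟩
    have hsub : Subsingleton (A ⧸ (Submodule.restrictScalars k (1 : Ideal A))) := by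
      rw [Submodule.Quotient.subsingleton_iff]
      ext x
      simp [Ideal.one_eq_top]
    refine Submodule.eq_top_iff'.mpr fun x => ?_
    rw [show x = 0 from Subsingleton.elim x 0]
    simp
  | succ q IH =>
    set I : Ideal A := augIdeal k A with hI
    set Iq := Submodule.restrictScalars k (I ^ q) with hIq
    set Iq1 := Submodule.restrictScalars k (I ^ (q + 1)) with hIq1
    have hle : Iq1 ≤ Iq := fun x hx => Ideal.pow_le_pow_right (Nat.le_succ q) hx
    let f : (A ⧸ Iq1) →ₗ[k] (A ⧸ Iq) :=
      Submodule.mapQ Iq1 Iq LinearMap.id (fun x hx => hle hx)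
    have hfq : ∀ x : A, f (Iq1.mkQ x) = Iq.mkQ x := fun x => rfl
    apply S7.fd_of_ker_range f
    · -- the kernel is spanned by the images of generators of `I ^ q`
      obtain ⟨T, hT⟩ := IsNoetherian.noetherian (I ^ q)
      have hmap : ∀ x ∈ Submodule.span A (↑T : Set A),
          x ∈ (I ^ q : Ideal A) ∧ Iq1.mkQ x ∈ Submodule.span k (Iq1.mkQ '' ↑T) := by
        intro x hx
        induction hx using Submodule.span_induction with
        | mem y hy =>
          exact ⟨hT ▸ Submodule.subset_span hy,
            Submodule.subset_span (Set.mem_image_of_mem _ hy)⟩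
        | zero => simp
        | add y1 y2 hy1 hy2 ih1 ih2 =>
          exact ⟨add_mem ih1.1 ih2.1, by rw [map_add]; exact add_mem ih1.2 ih2.2⟩
        | smul a y hy ih =>
          refine ⟨Ideal.mul_mem_left _ a ih.1, ?_⟩
          have hdec : a • y = (Coalgebra.counit (R := k) a) • y +
              (a - algebraMap k A (Coalgebra.counit (R := k) a)) * y := by
            rw [show a • y = a * y from rfl,
              show (Coalgebra.counit (R := k) a) • y
                = algebraMap k A (Coalgebra.counit (R := k) a) * y from Algebra.smul_def _ _]
            ring
          have hz : Iq1.mkQ ((a - algebraMap k A (Coalgebra.counit (R := k) a)) * y) = 0 := by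
            rw [Submodule.mkQ_apply, Submodule.Quotient.mk_eq_zero]
            have h1 : a - algebraMap k A (Coalgebra.counit (R := k) a) ∈ I := by
              rw [hI, S7.mem_augIdeal_iff, map_sub, Bialgebra.counit_algebraMap, sub_self]
            have h2 : (a - algebraMap k A (Coalgebra.counit (R := k) a)) * y ∈ I * I ^ q :=
              Submodule.mul_mem_mul h1 ih.1
            rwa [← pow_succ'] at h2
          rw [hdec, map_add, map_smul, hz, add_zero]
          exact Submodule.smul_mem _ _ ih.2
      have hker : LinearMap.ker f ≤ Submodule.span k (Iq1.mkQ '' ↑T) := by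
        intro z hz
        obtain ⟨x, rfl⟩ := Iq1.mkQ_surjective z
        have hx : x ∈ (I ^ q : Ideal A) := by
          have : f (Iq1.mkQ x) = 0 := hz
          rw [hfq, Submodule.mkQ_apply, Submodule.Quotient.mk_eq_zero] at this
          exact this
        exact (hmap x (by rwa [hT])).2
      haveI : FiniteDimensional k (Submodule.span k (Iq1.mkQ '' ↑T)) :=
        FiniteDimensional.span_of_finite k (T.finite_toSet.image _)
      exact Submodule.finiteDimensional_of_le hker
    · -- the range is everything, and the target is finite-dimensional by induction
      have hsurj : Function.Surjective f := by
        intro z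
        obtain ⟨x, rfl⟩ := Iq.mkQ_surjective z
        exact ⟨Iq1.mkQ x, hfq x⟩
      haveI : FiniteDimensional k (A ⧸ Iq) := by rw [hIq, hI]; exact IH
      rw [LinearMap.range_eq_top.mpr hsurj]
      exact LinearEquiv.finiteDimensional (Submodule.topEquiv).symm

lemma S7.findim_Hquot (hC : CommByFinite k A H ι) (m : ℕ) (hm : 0 < m) :
    FiniteDimensional k (H ⧸ ((augHIdeal k A H ι) ^ m)) := by
  classical
  set U := (augHIdeal k A H ι) ^ m with hU
  set Q := Submodule.restrictScalars k ((augIdeal k A) ^ m) with hQ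
  haveI := S7.findim_Aquot hC m
  obtain ⟨T', hT'⟩ := Module.finite_def.mp (S7.findim_Aquot hC m)
  choose lift hlift using Q.mkQ_surjective
  obtain ⟨t, ht⟩ := hC.finiteOver
  -- `A` is spanned by lifts of `T'` together with `Q`
  have hA : Submodule.span k (lift '' ↑T') ⊔ Q = ⊤ := by
    have hmap : Submodule.map Q.mkQ (Submodule.span k (lift '' ↑T') ⊔ Q) = ⊤ := by
      rw [Submodule.map_sup, Submodule.map_span, ← Set.image_comp,
        show Q.mkQ ∘ lift = id from funext hlift, Set.image_id, hT']
      exact top_sup_eq _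
    have h2 := congrArg (Submodule.comap Q.mkQ) hmap
    rwa [Submodule.comap_map_eq, Submodule.ker_mkQ, sup_assoc, sup_idem,
      Submodule.comap_top] at h2
  -- the finite spanning set for `H` modulo `U`
  set W : Set H := {x : H | ∃ c ∈ lift '' ↑T', ∃ y ∈ t, x = ι c * y} with hW
  have hWfin : W.Finite := by
    have h1 : W ⊆ (fun p : A × H => ι p.1 * p.2) ''
        ((lift '' ↑T') ×ˢ (↑t : Set H)) := by
      rintro x ⟨c, hc, y, hy, rfl⟩
      exact ⟨(c, y), ⟨hc, hy⟩, rfl⟩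
    exact Set.Finite.subset (Set.Finite.image _
      (((T'.finite_toSet).image lift).prod t.finite_toSet)) h1
  have hHspan : Submodule.span k W ⊔ U = ⊤ := by
    rw [eq_top_iff, ← ht]
    refine Submodule.span_le.mpr ?_
    rintro x ⟨a, y, hy, rfl⟩
    have ha : a ∈ Submodule.span k (lift '' ↑T') ⊔ Q := hA.ge Submodule.mem_top
    obtain ⟨u, hu, e, he, rfl⟩ := Submodule.mem_sup.mp ha
    rw [map_add, add_mul]
    refine add_mem ?_ ?_
    · -- ι u * y ∈ span k W
      have himg : ι u * y ∈ Submodule.map ((LinearMap.mulRight k y).comp ι)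
          (Submodule.span k (lift '' ↑T')) :=
        ⟨u, hu, rfl⟩
      rw [Submodule.map_span] at himg
      refine Submodule.mem_sup_left (Submodule.span_mono ?_ himg)
      rintro z ⟨c, hc, rfl⟩
      exact ⟨c, hc, y, hy, rfl⟩
    · exact Submodule.mem_sup_right (S7.iota_pow_mul_mem hC m hm e he y)
  -- conclude
  refine Module.finite_def.mpr ?_
  have htop : (⊤ : Submodule k (H ⧸ U)) = Submodule.span k (U.mkQ '' W) := by
    have h1 : Submodule.map U.mkQ (Submodule.span k W ⊔ U) = ⊤ := by
      rw [hHspan, Submodule.map_top, Submodule.range_mkQ]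
    rw [Submodule.map_sup, Submodule.map_span] at h1
    rw [← h1]
    have h2 : Submodule.map U.mkQ U = ⊥ := by
      rw [Submodule.eq_bot_iff]
      rintro z ⟨u, hu, rfl⟩
      rw [Submodule.mkQ_apply, Submodule.Quotient.mk_eq_zero]
      exact hu
    rw [h2, sup_bot_eq]
  rw [htop]
  exact Submodule.fg_span (hWfin.image _)

end Statement7Aux

open Paper in
/-- The restriction map `ι° : H° → A°` maps the tangential
component `W(H°)` onto `A' = {f ∈ A° : f((A⁺)ⁿ) = 0 for some n > 0}`, the
irreducible component of `A°` containing the counit. -/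
theorem statement_7
    (k : Type) [Field k] [IsAlgClosed k]
    (A : Type) [CommRing A] [HopfAlgebra k A]
    (H : Type) [Ring H] [HopfAlgebra k H]
    (ι : A →ₗ[k] H)
    (hCbF : CommByFinite k A H ι)
    (hyp : StandingHyp k A H ι) :
    iotaDual k A H ι '' tangential k A H ι = Aprime k A := by
  ext α
  constructor
  · rintro ⟨f, ⟨hfD, n, hn, hvan⟩, rfl⟩
    refine ⟨n, hn, fun x hx => ?_⟩
    have h1 : ι x ∈ (augHIdeal k A H ι) ^ n := by
      simpa [mul_one] using S7.iota_pow_mul_mem hCbF n hn x hx 1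
    exact hvan (ι x) h1
  · rintro ⟨n, hn, hvan⟩
    obtain ⟨m, hm, hnm, hAR⟩ := S7.artinRees hCbF n hn
    set U := (augHIdeal k A H ι) ^ m with hU
    set φ : A →ₗ[k] (H ⧸ U) := U.mkQ ∘ₗ ι with hφ
    have hker : LinearMap.ker φ ≤ LinearMap.ker α := by
      intro a ha
      have h1 : ι a ∈ U := by
        rw [LinearMap.mem_ker, hφ, LinearMap.comp_apply, Submodule.mkQ_apply,
          Submodule.Quotient.mk_eq_zero] at ha
        exact ha
      exact LinearMap.mem_ker.mpr (hvan a (hAR a h1))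
    set ᾱ : (A ⧸ LinearMap.ker φ) →ₗ[k] k := Submodule.liftQ _ α hker with hᾱ
    set e := LinearMap.quotKerEquivRange φ with he
    set ψ : ↥(LinearMap.range φ) →ₗ[k] k := ᾱ ∘ₗ (e.symm : _ →ₗ[k] _) with hψ
    obtain ⟨β, hβ⟩ := ψ.exists_extend
    refine ⟨β ∘ₗ U.mkQ, ⟨⟨U, ?_, ?_, ?_⟩, m, hm, ?_⟩, ?_⟩
    · exact fun h x hx => S7.augH_pow_stable hCbF m hm h x hx
    · intro x hx
      rw [LinearMap.mem_ker, LinearMap.comp_apply, Submodule.mkQ_apply,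
        (Submodule.Quotient.mk_eq_zero U).mpr hx, map_zero]
    · exact S7.findim_Hquot hCbF m hm
    · intro x hx
      rw [LinearMap.comp_apply, Submodule.mkQ_apply,
        (Submodule.Quotient.mk_eq_zero U).mpr (hU ▸ hx), map_zero]
    · apply LinearMap.ext
      intro a
      have h1 : φ a ∈ LinearMap.range φ := LinearMap.mem_range_self φ a
      have h2 : (β ∘ₗ U.mkQ) (ι a) = β (φ a) := rfl
      have h3 : β (φ a) = ψ ⟨φ a, h1⟩ := by
        rw [← hβ]; rfl
      have h4 : e.symm ⟨φ a, h1⟩ =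
          Submodule.Quotient.mk (p := LinearMap.ker φ) a := by
        rw [LinearEquiv.symm_apply_eq]
        exact Subtype.ext (LinearMap.quotKerEquivRange_apply_mk φ a).symm
      have h5 : ψ ⟨φ a, h1⟩ = α a := by
        rw [hψ, LinearMap.comp_apply, LinearEquiv.coe_coe, h4, hᾱ,
          Submodule.liftQ_apply]
      show (β ∘ₗ U.mkQ) (ι a) = α a
      rw [h2, h3, h5]
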